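/- Let a ∈ ℕ^n with a_j ≥ 1 for all j, and b ∈ ℕ. The knapsack equation a_1 x_1 + ⋯ + a_n x_n = b has a solution x ∈ ℕ^n if and only if the univariate polynomial z^b - 1 can be written as ∑_{j=1}^n Q_j(z)(z^{a_j} - 1) for univariate polynomials Q_j ∈ ℝ[z] with nonnegative coefficients of degree at most b - min_j a_j. -/

import Mathlib

open Polynomial Finset

private lemma coeff_nonneg_mul {p q : Polynomial ℝ} (hp : ∀ i, 0 ≤ p.coeff i)
    (hq : ∀ i, 0 ≤ q.coeff i) (i : ℕ) : 0 ≤ (p * q).coeff i := by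
  rw [coeff_mul]
  exact Finset.sum_nonneg fun x _ => mul_nonneg (hp _) (hq _)

theorem discrete_farkas_knapsack
    (n : ℕ) (a : Fin n → ℕ) (ha : ∀ j, 1 ≤ a j) (b : ℕ) :
    (∃ x : Fin n → ℕ, ∑ j, a j * x j = b) ↔
    (∃ Q : Fin n → Polynomial ℝ,
      (∀ j i, 0 ≤ (Q j).coeff i) ∧
      (∀ j, (Q j).natDegree ≤ b - ⨅ j, a j) ∧
      (X : Polynomial ℝ) ^ b - 1 = ∑ j, Q j * (X ^ a j - 1)) := by
  classical
  constructor
  · rintro ⟨x, hx⟩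
    -- define partial sums
    set f : ℕ → ℕ := fun k => if h : k < n then a ⟨k, h⟩ * x ⟨k, h⟩ else 0 with hf
    set s : ℕ → ℕ := fun m => ∑ k ∈ Finset.range m, f k with hs
    have hsn : s n = b := by
      rw [← hx]
      show ∑ k ∈ Finset.range n, f k = _
      rw [← Fin.sum_univ_eq_sum_range f n]
      exact Finset.sum_congr rfl fun j _ => by simp [hf, j.isLt]
    have hstep : ∀ j : Fin n, s (j.val + 1) = s j.val + a j * x j := by
      intro j
      simp only [hs, Finset.sum_range_succ, hf, dif_pos j.isLt]
    have hsle : ∀ j : Fin n, s (j.val + 1) ≤ b := by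
      intro j
      rw [← hsn, hs]
      exact Finset.sum_le_sum_of_subset (Finset.range_subset_range.2 j.isLt)
    refine ⟨fun j => X ^ (s j.val) * ∑ t ∈ Finset.range (x j), X ^ (a j * t), ?_, ?_, ?_⟩
    · intro j i
      refine coeff_nonneg_mul (fun i => ?_) (fun i => ?_) i
      · rw [coeff_X_pow]; positivity
      · rw [finset_sum_coeff]
        refine Finset.sum_nonneg fun t _ => ?_
        rw [coeff_X_pow]; positivity
    · intro j
      rcases Nat.eq_zero_or_pos (x j) with h0 | h0
      · simp [h0]
      · obtain ⟨m, hm⟩ : ∃ m, x j = m + 1 := ⟨x j - 1, by omega⟩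
        have hd : ((X : Polynomial ℝ) ^ (s j.val) *
            ∑ t ∈ Finset.range (x j), X ^ (a j * t)).natDegree ≤ s j.val + a j * m := by
          refine le_trans (natDegree_mul_le) ?_
          gcongr
          · exact natDegree_X_pow_le _
          · refine natDegree_sum_le_of_forall_le _ _ fun t ht => ?_
            refine le_trans (natDegree_X_pow_le _) ?_
            have : t ≤ m := by simp [hm] at ht; omega
            exact Nat.mul_le_mul_left _ this
        refine le_trans hd ?_
        have h1 : s j.val + a j * x j ≤ b := by rw [← hstep]; exact hsle j
        have h2 : (⨅ j, a j) ≤ a j := ciInf_le (OrderBot.bddBelow _) j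
        have h3 : a j * x j = a j * m + a j := by rw [hm]; ring
        omega
    · have key : ∀ j : Fin n,
          (X ^ (s j.val) * ∑ t ∈ Finset.range (x j), X ^ (a j * t)) * ((X : Polynomial ℝ) ^ a j - 1)
            = X ^ (s (j.val + 1)) - X ^ (s j.val) := by
        intro j
        have hg : (∑ t ∈ Finset.range (x j), (X : Polynomial ℝ) ^ (a j * t)) * (X ^ a j - 1)
            = X ^ (a j * x j) - 1 := by
          have := geom_sum_mul ((X : Polynomial ℝ) ^ a j) (x j)
          simpa [← pow_mul, mul_comm] using this
        calc (X ^ (s j.val) * ∑ t ∈ Finset.range (x j), (X:Polynomial ℝ) ^ (a j * t)) * (X ^ a j - 1)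
            = X ^ (s j.val) * ((∑ t ∈ Finset.range (x j), (X:Polynomial ℝ) ^ (a j * t)) * (X ^ a j - 1)) := by ring
          _ = X ^ (s j.val) * (X ^ (a j * x j) - 1) := by rw [hg]
          _ = X ^ (s j.val + a j * x j) - X ^ (s j.val) := by rw [pow_add]; ring
          _ = X ^ (s (j.val + 1)) - X ^ (s j.val) := by rw [hstep]
      rw [Finset.sum_congr rfl (fun j (_ : j ∈ Finset.univ) => key j),
        Fin.sum_univ_eq_sum_range (fun k => (X : Polynomial ℝ) ^ (s (k + 1)) - X ^ (s k)) n,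
        Finset.sum_range_sub (fun k => (X : Polynomial ℝ) ^ (s k)), hsn]
      have hs0 : s 0 = 0 := by simp [hs]
      rw [hs0, pow_zero]
  · rintro ⟨Q, hQpos, hQdeg, hQeq⟩
    by_contra hnb
    -- B: the non-representable values up to b
    set P : ℕ → Prop := fun v => ∃ x : Fin n → ℕ, ∑ j, a j * x j = v with hP
    set B : Finset ℕ := (Finset.range (b + 1)).filter (fun v => ¬ P v) with hB
    have hP0 : P 0 := ⟨fun _ => 0, by simp⟩
    have hbB : b ∈ B := by
      simp only [hB, Finset.mem_filter, Finset.mem_range]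
      exact ⟨Nat.lt_succ_self b, hnb⟩
    have h0B : (0 : ℕ) ∉ B := by
      simp only [hB, Finset.mem_filter]
      tauto
    -- sum the coefficient identity over B
    have hsum : ∑ v ∈ B, ((X : Polynomial ℝ) ^ b - 1).coeff v
        = ∑ v ∈ B, (∑ j, Q j * ((X : Polynomial ℝ) ^ a j - 1)).coeff v := by
      rw [hQeq]
    have hLHS : ∑ v ∈ B, ((X : Polynomial ℝ) ^ b - 1).coeff v = 1 := by
      have : ∀ v ∈ B, ((X : Polynomial ℝ) ^ b - 1).coeff v
          = if v = b then (1:ℝ) else 0 := by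
        intro v hv
        have hv0 : v ≠ 0 := fun h => h0B (h ▸ hv)
        rw [coeff_sub, coeff_X_pow, coeff_one, if_neg hv0, sub_zero]
      rw [Finset.sum_congr rfl this, Finset.sum_ite_eq' B b (fun _ => (1:ℝ)), if_pos hbB]
    -- each j-term sums to ≤ 0
    have hRHS : ∑ v ∈ B, (∑ j, Q j * ((X : Polynomial ℝ) ^ a j - 1)).coeff v ≤ 0 := by
      simp only [finset_sum_coeff]
      rw [Finset.sum_comm]
      refine Finset.sum_nonpos fun j _ => ?_
      have hco : ∀ v, (Q j * ((X : Polynomial ℝ) ^ a j - 1)).coeff v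
          = (if a j ≤ v then (Q j).coeff (v - a j) else 0) - (Q j).coeff v := by
        intro v
        rw [mul_sub, mul_one, coeff_sub, coeff_mul_X_pow']
      rw [Finset.sum_congr rfl (fun v _ => hco v), Finset.sum_sub_distrib, sub_nonpos]
      -- incoming ≤ outgoing
      set T : Finset ℕ := (B.filter (fun v => a j ≤ v)).image (fun v => v - a j) with hT
      have hTB : T ⊆ B := by
        intro u hu
        rw [hT, Finset.mem_image] at hu
        obtain ⟨v, hv, rfl⟩ := hu
        rw [Finset.mem_filter] at hv
        obtain ⟨hvB, hav⟩ := hv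
        rw [hB, Finset.mem_filter, Finset.mem_range] at hvB ⊢
        refine ⟨by omega, fun hPu => ?_⟩
        obtain ⟨x', hx'⟩ := hPu
        refine hvB.2 ⟨fun k => x' k + if k = j then 1 else 0, ?_⟩
        simp only [mul_add, Finset.sum_add_distrib, hx', mul_ite, mul_one, mul_zero,
          Finset.sum_ite_eq', Finset.mem_univ, if_true]
        omega
      have h1 : ∑ v ∈ B, (if a j ≤ v then (Q j).coeff (v - a j) else 0)
          = ∑ u ∈ T, (Q j).coeff u := by
        rw [Finset.sum_ite, Finset.sum_const_zero, add_zero, hT]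
        rw [Finset.sum_image ?hinj]
        case hinj =>
          intro v hv w hw hvw
          rw [Finset.mem_coe, Finset.mem_filter] at hv hw
          dsimp only at hvw
          omega
      rw [h1]
      exact Finset.sum_le_sum_of_subset_of_nonneg hTB fun u _ _ => hQpos j u
    rw [hsum] at hLHS
    linarith
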